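/- Under the assumptions of the gap setting (density p with gap of size ε at λ_*, sup_x |p̂_h(x) − p_h(x)| ≤ aₙ, ε > 2aₙ, λ* = λ_* + ε > aₙ, and λ ∈ (λ_* + aₙ, λ* − aₙ)), let C be any connected component of S = {p ≥ λ*} and L̂(λ) = ∪_{X_i ∈ D̂_h(λ)} B(X_i, h). Then C_{−2h} ⊆ L̂(λ). -/

import Mathlib

open Metric Set MeasureTheory

/-- Volume of the unit ball in `ℝ^d`. -/
noncomputable def Vd (d : ℕ) : ℝ :=
  (volume (closedBall (0 : EuclideanSpace ℝ (Fin d)) 1)).toReal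

open Classical in
/-- The spherical-kernel (DBSCAN) density estimator based on the sample `X`. -/
noncomputable def sphKDE (d n : ℕ) (X : Fin n → EuclideanSpace ℝ (Fin d)) (h : ℝ)
    (x : EuclideanSpace ℝ (Fin d)) : ℝ :=
  ((Finset.univ.filter fun i => X i ∈ closedBall x h).card : ℝ) / (n * h ^ d * Vd d)

/-- The expectation `p_h(x) = P(B(x,h))/(h^d V_d)` of the spherical KDE. -/
noncomputable def smoothed (d : ℕ) (p : EuclideanSpace ℝ (Fin d) → ℝ) (h : ℝ)
    (x : EuclideanSpace ℝ (Fin d)) : ℝ :=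
  (∫ z in closedBall x h, p z) / (h ^ d * Vd d)

/-- The `h`-erosion of a set. -/
def ero {X : Type*} [PseudoMetricSpace X] (B : Set X) (h : ℝ) : Set X :=
  {x ∈ B | Metric.closedBall x h ⊆ B}

lemma Vd_pos (d : ℕ) : 0 < Vd d := by
  unfold Vd
  refine ENNReal.toReal_pos (ne_of_gt (measure_closedBall_pos volume _ one_pos)) ?_
  exact (measure_closedBall_lt_top).ne

lemma vol_cball (d : ℕ) (x : EuclideanSpace ℝ (Fin d)) (h : ℝ) (hh : 0 < h) :
    (volume (closedBall x h)).toReal = h ^ d * Vd d := by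
  rw [Measure.addHaar_closedBall' volume x hh.le]
  rw [ENNReal.toReal_mul, ENNReal.toReal_ofReal (pow_nonneg hh.le _)]
  simp [Vd, finrank_euclideanSpace_fin]

lemma smoothed_ge (d : ℕ) (p : EuclideanSpace ℝ (Fin d) → ℝ)
    (hint : Integrable p) (h : ℝ) (hh : 0 < h) (lam : ℝ)
    (y : EuclideanSpace ℝ (Fin d)) (hy : ∀ z ∈ closedBall y h, lam ≤ p z) :
    lam ≤ smoothed d p h y := by
  have hc : 0 < h ^ d * Vd d := mul_pos (pow_pos hh d) (Vd_pos d)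
  rw [smoothed, le_div_iff₀ hc]
  have h1 : ∫ z in closedBall y h, lam ≤ ∫ z in closedBall y h, p z := by
    refine setIntegral_mono_on (integrableOn_const (measure_closedBall_lt_top).ne)
      hint.integrableOn measurableSet_closedBall (fun z hz => hy z hz)
  have h2 : ∫ _ in closedBall y h, lam = lam * (h ^ d * Vd d) := by
    rw [setIntegral_const, smul_eq_mul, measureReal_def, vol_cball d y h hh, mul_comm]
  linarith

theorem stmt12 (d n : ℕ) (p : EuclideanSpace ℝ (Fin d) → ℝ)
    (hmeas : Measurable p) (hp0 : ∀ x, 0 ≤ p x) (hone : ∫ x, p x = 1)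
    (lstar ε : ℝ) (hε : 0 < ε)
    (hgap : ∀ x, p x < lstar + ε → p x ≤ lstar)
    (X : Fin n → EuclideanSpace ℝ (Fin d)) (h : ℝ) (hh : 0 < h)
    (an : ℝ) (han : 0 ≤ an) (hεan : 2 * an < ε) (hstar : an < lstar + ε)
    (hclose : ∀ x, |sphKDE d n X h x - smoothed d p h x| ≤ an)
    (l : ℝ) (hl : l ∈ Set.Ioo (lstar + an) (lstar + ε - an))
    (x₀ : EuclideanSpace ℝ (Fin d)) (hx₀ : lstar + ε ≤ p x₀) :
    -- C is the connected component of S = {p ≥ lstar + ε} containing x₀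
    ero (connectedComponentIn {x | lstar + ε ≤ p x} x₀) (2 * h) ⊆
      ⋃ i ∈ {i : Fin n | l ≤ sphKDE d n X h (X i)}, closedBall (X i) h := by
  classical
  have hint : Integrable p := by
    by_contra hni
    rw [integral_undef hni] at hone
    norm_num at hone
  intro x hx
  obtain ⟨hxC, hball⟩ := hx
  have hballS : closedBall x (2 * h) ⊆ {x | lstar + ε ≤ p x} :=
    hball.trans (connectedComponentIn_subset _ _)
  -- p̂(x) > 0, so there is a sample point in B(x,h)
  have hsub1 : ∀ z ∈ closedBall x h, lstar + ε ≤ p z := fun z hz =>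
    hballS (closedBall_subset_closedBall (by linarith) hz)
  have hsm : lstar + ε ≤ smoothed d p h x := smoothed_ge d p hint h hh _ x hsub1
  have hkde : 0 < sphKDE d n X h x := by
    have := abs_le.mp (hclose x)
    linarith
  have hcard : (Finset.univ.filter fun i => X i ∈ closedBall x h).Nonempty := by
    rw [Finset.nonempty_iff_ne_empty]
    intro hemp
    rw [sphKDE, hemp] at hkde
    simp at hkde
  obtain ⟨j, hj⟩ := hcard
  rw [Finset.mem_filter] at hj
  have hjx : dist (X j) x ≤ h := mem_closedBall.mp hj.2
  -- X j's ball is inside S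
  have hsub2 : ∀ z ∈ closedBall (X j) h, lstar + ε ≤ p z := by
    intro z hz
    apply hballS
    rw [mem_closedBall] at hz ⊢
    calc dist z x ≤ dist z (X j) + dist (X j) x := dist_triangle _ _ _
      _ ≤ 2 * h := by linarith
  have hsmj : lstar + ε ≤ smoothed d p h (X j) := smoothed_ge d p hint h hh _ (X j) hsub2
  have hkdej : l ≤ sphKDE d n X h (X j) := by
    have := abs_le.mp (hclose (X j))
    have := hl.2
    linarith
  refine mem_iUnion₂.mpr ⟨j, hkdej, ?_⟩
  rw [mem_closedBall, dist_comm]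
  exact hjx
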